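/- Let F be a field, k ≥ 2, and let P(λ) = Σ_{i=0}^{k} P_i φ_i(λ) with P_i ∈ F^{m×m}. Then m_Φ^P(λ)·(Φ_k(λ)⊗I_m) = P(λ) and (M_Φ(λ)⊗I_m)·(Φ_k(λ)⊗I_m) = 0, and consequently F_Φ^P(λ)·(Φ_k(λ)⊗I_m) = e_1 ⊗ P(λ), where e_1 is the first canonical vector of F^k. -/
import Mathlib


open Matrix
open scoped Kronecker

/-- The column vector `Φ_k(λ) ⊗ I_m`, where `Φ_k(λ) = [φ_{k-1}(λ), …, φ_1(λ), φ_0(λ)]ᵀ`,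
as a `km × m` polynomial matrix (row blocks indexed by `Fin k`). -/
noncomputable def phiKron {F : Type*} [Field F] (φ : ℕ → Polynomial F) (k m : ℕ) :
    Matrix (Fin k × Fin m) (Fin m) (Polynomial F) :=
  Matrix.of fun p j => if p.2 = j then φ (k - 1 - (p.1 : ℕ)) else 0

/-- The pencil `M_Φ(λ) ∈ F[λ]^{(k-1)×k}`: its `i`-th (0-based) row has `-α_{k-2-i}` in column
`i`, `λ - β_{k-2-i}` in column `i+1` and `-γ_{k-2-i}` in column `i+2`, zeros elsewhere. -/
noncomputable def MPhiMat {F : Type*} [Field F] (α β γ : ℕ → F) (k : ℕ) :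
    Matrix (Fin (k - 1)) (Fin k) (Polynomial F) :=
  Matrix.of fun i j =>
    if (j : ℕ) = (i : ℕ) then -Polynomial.C (α (k - 2 - (i : ℕ)))
    else if (j : ℕ) = (i : ℕ) + 1 then Polynomial.X - Polynomial.C (β (k - 2 - (i : ℕ)))
    else if (j : ℕ) = (i : ℕ) + 2 then -Polynomial.C (γ (k - 2 - (i : ℕ)))
    else 0

/-- The block row `m_Φ^P(λ) = [α_{k-1}⁻¹(λ-β_{k-1})P_k + P_{k-1},
P_{k-2} - α_{k-1}⁻¹γ_{k-1}P_k, P_{k-3}, …, P_1, P_0] ∈ F[λ]^{m×km}`. -/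
noncomputable def mPhiMat {F : Type*} [Field F] (α β γ : ℕ → F) (k m : ℕ)
    (P : ℕ → Matrix (Fin m) (Fin m) F) :
    Matrix (Fin m) (Fin k × Fin m) (Polynomial F) :=
  Matrix.of fun r c =>
    if (c.1 : ℕ) = 0 then
      Polynomial.C ((α (k - 1))⁻¹) * (Polynomial.X - Polynomial.C (β (k - 1)))
          * Polynomial.C (P k r c.2)
        + Polynomial.C (P (k - 1) r c.2)
    else if (c.1 : ℕ) = 1 then
      Polynomial.C (P (k - 2) r c.2)
        - Polynomial.C ((α (k - 1))⁻¹ * γ (k - 1)) * Polynomial.C (P k r c.2)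
    else Polynomial.C (P (k - 1 - (c.1 : ℕ)) r c.2)

/-- The pencil `F_Φ^P(λ) = [m_Φ^P(λ); M_Φ(λ) ⊗ I_m] ∈ F[λ]^{km×km}`, with first row block
`m_Φ^P(λ)` and remaining row blocks `M_Φ(λ) ⊗ I_m`. -/
noncomputable def FPhiMat {F : Type*} [Field F] (α β γ : ℕ → F) (k m : ℕ)
    (P : ℕ → Matrix (Fin m) (Fin m) F) :
    Matrix (Fin k × Fin m) (Fin k × Fin m) (Polynomial F) :=
  Matrix.of fun p q =>
    if h : (p.1 : ℕ) = 0 then mPhiMat α β γ k m P p.2 q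
    else
      MPhiMat α β γ k ⟨(p.1 : ℕ) - 1, by have := p.1.isLt; omega⟩ q.1
        * (if p.2 = q.2 then 1 else 0)

/-- `m_Φ^P(λ)(Φ_k(λ)⊗I_m) = P(λ)`, `(M_Φ(λ)⊗I_m)(Φ_k(λ)⊗I_m) = 0`, and
consequently `F_Φ^P(λ)(Φ_k(λ)⊗I_m) = e_1 ⊗ P(λ)`. -/
theorem FPhi_mul_phiKron
    {F : Type*} [Field F] {m k : ℕ} (hk : 2 ≤ k)
    (α β γ : ℕ → F) (hα : ∀ j, α j ≠ 0)
    (φ : ℕ → Polynomial F) (hφ0 : φ 0 = 1)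
    (hrec : ∀ j : ℕ, Polynomial.C (α j) * φ (j + 1)
      = (Polynomial.X - Polynomial.C (β j)) * φ j
        - Polynomial.C (γ j) * (if j = 0 then 0 else φ (j - 1)))
    (P : ℕ → Matrix (Fin m) (Fin m) F) :
    mPhiMat α β γ k m P * phiKron φ k m
        = ∑ i ∈ Finset.range (k + 1), (P i).map (fun a => φ i * Polynomial.C a) ∧
    (MPhiMat α β γ k ⊗ₖ (1 : Matrix (Fin m) (Fin m) (Polynomial F))) * phiKron φ k m = 0 ∧
    FPhiMat α β γ k m P * phiKron φ k m
        = Matrix.of (fun (p : Fin k × Fin m) (c : Fin m) =>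
            if (p.1 : ℕ) = 0 then
              (∑ i ∈ Finset.range (k + 1), (P i).map (fun a => φ i * Polynomial.C a)) p.2 c
            else 0) := by
  classical
  obtain ⟨n, rfl⟩ : ∃ n, k = n + 2 := ⟨k - 2, by omega⟩
  have key : φ (n + 2)
      = Polynomial.C ((α (n + 1))⁻¹) * (Polynomial.X - Polynomial.C (β (n + 1))) * φ (n + 1)
        - Polynomial.C ((α (n + 1))⁻¹ * γ (n + 1)) * φ n := by
    have h := hrec (n + 1)
    rw [if_neg (Nat.succ_ne_zero n)] at h
    have h2 : φ (n + 1 + 1) = Polynomial.C ((α (n + 1))⁻¹)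
        * ((Polynomial.X - Polynomial.C (β (n + 1))) * φ (n + 1)
            - Polynomial.C (γ (n + 1)) * φ (n + 1 - 1)) := by
      rw [← h, ← mul_assoc, ← Polynomial.C_mul, inv_mul_cancel₀ (hα (n + 1)),
        Polynomial.C_1, one_mul]
    rw [show n + 1 + 1 = n + 2 from rfl, show n + 1 - 1 = n from rfl] at h2
    rw [h2, Polynomial.C_mul]
    ring
  have h1 : mPhiMat α β γ (n + 2) m P * phiKron φ (n + 2) m
      = ∑ i ∈ Finset.range (n + 2 + 1), (P i).map (fun a => φ i * Polynomial.C a) := by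
    apply Matrix.ext
    intro r c
    simp only [Matrix.mul_apply, phiKron, mPhiMat, Matrix.of_apply, Matrix.sum_apply,
      Matrix.map_apply, mul_ite, mul_zero, Fintype.sum_prod_type]
    simp only [Finset.sum_ite_eq' Finset.univ c, Finset.mem_univ, if_pos]
    rw [Fin.sum_univ_eq_sum_range
      (fun b => (if b = 0 then
          Polynomial.C ((α (n + 2 - 1))⁻¹) * (Polynomial.X - Polynomial.C (β (n + 2 - 1)))
            * Polynomial.C (P (n + 2) r c) + Polynomial.C (P (n + 2 - 1) r c)
        else if b = 1 then Polynomial.C (P (n + 2 - 2) r c)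
            - Polynomial.C ((α (n + 2 - 1))⁻¹ * γ (n + 2 - 1)) * Polynomial.C (P (n + 2) r c)
        else Polynomial.C (P (n + 2 - 1 - b) r c)) * φ (n + 2 - 1 - b))]
    rw [Finset.sum_range_succ', Finset.sum_range_succ']
    rw [Finset.sum_range_succ, Finset.sum_range_succ, Finset.sum_range_succ]
    have hrefl : (∑ i ∈ Finset.range n,
          Polynomial.C (P (n + 2 - 1 - (i + 1 + 1)) r c) * φ (n + 2 - 1 - (i + 1 + 1)))
        = ∑ i ∈ Finset.range n, φ i * Polynomial.C (P i r c) := by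
      rw [← Finset.sum_range_reflect (fun i => φ i * Polynomial.C (P i r c)) n]
      refine Finset.sum_congr rfl fun i hi => ?_
      rw [Finset.mem_range] at hi
      rw [show n + 2 - 1 - (i + 1 + 1) = n - 1 - i by omega]
      ring
    simp only [Nat.add_eq_zero, Nat.succ_ne_zero, and_false, if_false, one_ne_zero,
      Nat.add_eq_right, and_true, Nat.add_right_cancel_iff, Nat.add_sub_cancel,
      if_true, eq_self_iff_true]
    rw [hrefl]
    simp only [show n + 2 - 1 = n + 1 from rfl, show n + 2 - 2 = n from rfl,
      show n + 1 - 1 = n from rfl, show n + 1 - 0 = n + 1 from rfl,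
      show n + 1 - (0 + 1) = n from rfl]
    rw [key]
    ring
  have h2 : (MPhiMat α β γ (n + 2) ⊗ₖ (1 : Matrix (Fin m) (Fin m) (Polynomial F)))
      * phiKron φ (n + 2) m = 0 := by
    apply Matrix.ext
    rintro ⟨i, r⟩ c
    simp only [Matrix.mul_apply, phiKron, MPhiMat, Matrix.kroneckerMap_apply, Matrix.of_apply,
      Matrix.one_apply, Matrix.zero_apply, mul_ite, mul_zero, mul_one,
      Fintype.sum_prod_type]
    simp only [Finset.sum_ite_eq' Finset.univ c, Finset.mem_univ, if_pos]
    rcases eq_or_ne r c with rfl | hrc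
    swap
    · simp [hrc]
    simp only [if_pos rfl, if_true]
    rcases i with ⟨iv, hi⟩
    simp only [Fin.val_mk] at *
    have hi' : iv ≤ n := by omega
    obtain ⟨d, hd⟩ : ∃ d, n = iv + d := ⟨n - iv, by omega⟩
    rw [Fin.sum_univ_eq_sum_range (fun b =>
      (if b = iv then -Polynomial.C (α (n + 2 - 2 - iv))
        else if b = iv + 1 then Polynomial.X - Polynomial.C (β (n + 2 - 2 - iv))
        else if b = iv + 2 then -Polynomial.C (γ (n + 2 - 2 - iv)) else 0)
        * φ (n + 2 - 1 - b))]
    have split : ∀ b ∈ Finset.range (n + 2),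
        (if b = iv then -Polynomial.C (α (n + 2 - 2 - iv))
          else if b = iv + 1 then Polynomial.X - Polynomial.C (β (n + 2 - 2 - iv))
          else if b = iv + 2 then -Polynomial.C (γ (n + 2 - 2 - iv)) else 0)
          * φ (n + 2 - 1 - b)
        = (if b = iv then -Polynomial.C (α (n + 2 - 2 - iv)) * φ (n + 2 - 1 - b) else 0)
          + ((if b = iv + 1 then
                (Polynomial.X - Polynomial.C (β (n + 2 - 2 - iv))) * φ (n + 2 - 1 - b) else 0)
          + (if b = iv + 2 then -Polynomial.C (γ (n + 2 - 2 - iv)) * φ (n + 2 - 1 - b) else 0)) := by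
      intro b _
      split_ifs with h1 h2 h3 <;> simp_all
    rw [Finset.sum_congr rfl split, Finset.sum_add_distrib, Finset.sum_add_distrib,
      Finset.sum_ite_eq' (Finset.range (n + 2)) iv,
      Finset.sum_ite_eq' (Finset.range (n + 2)) (iv + 1),
      Finset.sum_ite_eq' (Finset.range (n + 2)) (iv + 2)]
    rw [if_pos (Finset.mem_range.2 (by omega)), if_pos (Finset.mem_range.2 (by omega))]
    rcases d with _ | d'
    · rw [if_neg (by simp [Finset.mem_range]; omega)]
      rw [show n + 2 - 2 - iv = 0 by omega, show n + 2 - 1 - iv = 1 by omega,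
        show n + 2 - 1 - (iv + 1) = 0 by omega]
      have h := hrec 0
      rw [if_pos rfl, mul_zero] at h
      rw [show (1:ℕ) = 0 + 1 from rfl]
      linear_combination -h
    · rw [if_pos (Finset.mem_range.2 (by omega))]
      rw [show n + 2 - 2 - iv = d' + 1 by omega, show n + 2 - 1 - iv = d' + 1 + 1 by omega,
        show n + 2 - 1 - (iv + 1) = d' + 1 by omega,
        show n + 2 - 1 - (iv + 2) = d' + 1 - 1 by omega]
      have h := hrec (d' + 1)
      rw [if_neg (Nat.succ_ne_zero d')] at h
      linear_combination -h
  refine ⟨h1, h2, ?_⟩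
  apply Matrix.ext
  rintro ⟨b, r⟩ c
  by_cases hb : (b : ℕ) = 0
  · simp only [Matrix.mul_apply, FPhiMat, Matrix.of_apply, dif_pos hb, if_pos hb]
    rw [← Matrix.mul_apply, h1]
  · have hb2 := b.isLt
    have h2e : ((MPhiMat α β γ (n + 2) ⊗ₖ (1 : Matrix (Fin m) (Fin m) (Polynomial F)))
        * phiKron φ (n + 2) m) (⟨(b : ℕ) - 1, by omega⟩, r) c = 0 := by rw [h2]; rfl
    simp only [Matrix.mul_apply, Matrix.kroneckerMap_apply, Matrix.one_apply] at h2e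
    simp only [Matrix.mul_apply, FPhiMat, Matrix.of_apply, dif_neg hb, if_neg hb]
    exact h2e
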